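/- Let c₁ = 2a(9 + cos ξ) sin²(ξ/2)/Δx² and c₂ = 64 a² sin⁴(ξ/2)/Δx⁴ with a > 0, Δx > 0, ξ ∈ [-π, π]. Both roots λ₁ = (-c₁ + √(c₁² - 4c₂))/2 and λ₂ = (-c₁ - √(c₁² - 4c₂))/2 of λ² + c₁λ + c₂ are nonpositive, and they are both strictly negative whenever sin(ξ/2) ≠ 0. -/
import Mathlib


theorem stmt_2 (a Δx ξ : ℝ) (ha : 0 < a) (hΔx : 0 < Δx)
    (hξ : ξ ∈ Set.Icc (-Real.pi) Real.pi)
    (c₁ c₂ lam₁ lam₂ : ℝ)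
    (hc₁ : c₁ = 2 * a * (9 + Real.cos ξ) * Real.sin (ξ/2) ^ 2 / Δx ^ 2)
    (hc₂ : c₂ = 64 * a ^ 2 * Real.sin (ξ/2) ^ 4 / Δx ^ 4)
    (hlam₁ : lam₁ = (-c₁ + Real.sqrt (c₁ ^ 2 - 4 * c₂)) / 2)
    (hlam₂ : lam₂ = (-c₁ - Real.sqrt (c₁ ^ 2 - 4 * c₂)) / 2) :
    lam₁ ≤ 0 ∧ lam₂ ≤ 0 ∧ (Real.sin (ξ/2) ≠ 0 → lam₁ < 0 ∧ lam₂ < 0) := by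
  have hcos : -1 ≤ Real.cos ξ := Real.neg_one_le_cos ξ
  have h9 : (0:ℝ) < 9 + Real.cos ξ := by linarith
  have hc1 : 0 ≤ c₁ := by rw [hc₁]; positivity
  have hc2 : 0 ≤ c₂ := by rw [hc₂]; positivity
  have hsqnn := Real.sqrt_nonneg (c₁ ^ 2 - 4 * c₂)
  have hsq : Real.sqrt (c₁ ^ 2 - 4 * c₂) ≤ c₁ := by
    calc Real.sqrt (c₁ ^ 2 - 4 * c₂) ≤ Real.sqrt (c₁ ^ 2) :=
          Real.sqrt_le_sqrt (by linarith)
      _ = c₁ := Real.sqrt_sq hc1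
  refine ⟨by rw [hlam₁]; linarith, by rw [hlam₂]; linarith, ?_⟩
  intro hs
  have hc1p : 0 < c₁ := by rw [hc₁]; positivity
  have hc2p : 0 < c₂ := by rw [hc₂]; positivity
  have hsqlt : Real.sqrt (c₁ ^ 2 - 4 * c₂) < c₁ :=
    (Real.sqrt_lt' hc1p).mpr (by linarith)
  exact ⟨by rw [hlam₁]; linarith, by rw [hlam₂]; linarith⟩
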